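/- Suppose for each value u of a statistic U, the conditional risk ψ ↦ R₁(u, ψ) is strictly convex with unique minimizer m(u), and suppose ψ₀(u) = clamp(ψ(u), a(u), b(u)) where a(u) ≤ m(u) ≤ b(u) for all u. If P(ψ₀(U) ≠ ψ(U)) > 0, then E[R₁(U, ψ₀(U))] < E[R₁(U, ψ(U))] (assuming both expectations are finite). -/
import Mathlib


open MeasureTheory

lemma convex_seg_lt {f : ℝ → ℝ} (hc : ConvexOn ℝ Set.univ f) {p q z : ℝ}
    (hz : z ∈ openSegment ℝ p q) (hpq : f p < f q) : f z < f q := by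
  obtain ⟨s, t, hs, ht, hst, rfl⟩ := hz
  calc f (s • p + t • q) ≤ s * f p + t * f q :=
        hc.2 (Set.mem_univ p) (Set.mem_univ q) hs.le ht.le hst
    _ < s * f q + t * f q := by nlinarith
    _ = f q := by rw [← add_mul, hst, one_mul]

lemma clamp_strict_lt {f : ℝ → ℝ} (hc : ConvexOn ℝ Set.univ f) {m a b x : ℝ}
    (ham : a ≤ m) (hmb : m ≤ b) (hmin : ∀ y : ℝ, y ≠ m → f m < f y)
    (hne : max a (min x b) ≠ x) : f (max a (min x b)) < f x := by
  rcases lt_or_ge x a with hxa | hax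
  · have hclamp : max a (min x b) = a := by
      have : min x b = x := min_eq_left (hxa.le.trans (ham.trans hmb))
      rw [this, max_eq_left hxa.le]
    rw [hclamp]
    rcases eq_or_lt_of_le ham with heq | ham'
    · rw [heq]; exact hmin x (by linarith)
    · have hz : a ∈ openSegment ℝ m x := by
        rw [openSegment_symm, openSegment_eq_Ioo (hxa.trans ham')]
        exact ⟨hxa, ham'⟩
      exact convex_seg_lt hc (openSegment_symm ℝ m x ▸ hz) (hmin x (by linarith))
  · rcases le_or_gt x b with hxb | hbx
    · exfalso; apply hne
      rw [min_eq_left hxb, max_eq_right hax]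
    · have hclamp : max a (min x b) = b := by
        rw [min_eq_right hbx.le, max_eq_right (ham.trans hmb)]
      rw [hclamp]
      rcases eq_or_lt_of_le hmb with heq | hmb'
      · rw [← heq]; exact hmin x (by linarith)
      · have hz : b ∈ openSegment ℝ m x := by
          rw [openSegment_eq_Ioo (hmb'.trans hbx)]
          exact ⟨hmb', hbx⟩
        exact convex_seg_lt hc (openSegment_symm ℝ m x ▸ hz) (hmin x (by linarith))

/-- Abstract Brewster–Zidek type domination: if for each value `u` of a statistic `U` the
conditional risk `ψ ↦ R₁ u ψ` is strictly convex with unique minimizer `m u`, and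
`ψ₀ u = clamp (ψ u) (a u) (b u)` with `a u ≤ m u ≤ b u`, then as soon as
`P(ψ₀(U) ≠ ψ(U)) > 0` (and both risks are finite), the clamped procedure has strictly
smaller expected risk. -/
theorem clamped_procedure_dominates {Ω α : Type*} [MeasurableSpace Ω] [MeasurableSpace α]
    (ℙ : Measure Ω) [IsProbabilityMeasure ℙ] (U : Ω → α) (hU : Measurable U)
    (R₁ : α → ℝ → ℝ) (m a b ψ ψ₀ : α → ℝ)
    (hconv : ∀ u, StrictConvexOn ℝ Set.univ (R₁ u))
    (hmin : ∀ u, ∀ x : ℝ, x ≠ m u → R₁ u (m u) < R₁ u x)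
    (ham : ∀ u, a u ≤ m u) (hmb : ∀ u, m u ≤ b u)
    (hψ₀ : ∀ u, ψ₀ u = max (a u) (min (ψ u) (b u)))
    (hpos : 0 < ℙ {ω | ψ₀ (U ω) ≠ ψ (U ω)})
    (hint₀ : Integrable (fun ω => R₁ (U ω) (ψ₀ (U ω))) ℙ)
    (hint : Integrable (fun ω => R₁ (U ω) (ψ (U ω))) ℙ) :
    ∫ ω, R₁ (U ω) (ψ₀ (U ω)) ∂ℙ < ∫ ω, R₁ (U ω) (ψ (U ω)) ∂ℙ := by
  set g : Ω → ℝ := fun ω => R₁ (U ω) (ψ (U ω)) - R₁ (U ω) (ψ₀ (U ω)) with hg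
  have hstrict : ∀ ω, ψ₀ (U ω) ≠ ψ (U ω) → 0 < g ω := by
    intro ω h
    have := clamp_strict_lt (hconv (U ω)).convexOn (ham (U ω)) (hmb (U ω))
      (hmin (U ω)) (by rw [← hψ₀ (U ω)]; exact h)
    rw [← hψ₀ (U ω)] at this
    simp only [hg, sub_pos]; exact this
  have hnonneg : ∀ ω, 0 ≤ g ω := by
    intro ω
    by_cases h : ψ₀ (U ω) = ψ (U ω)
    · simp [hg, h]
    · exact (hstrict ω h).le
  have hgint : Integrable g ℙ := hint.sub hint₀
  have hsupp : {ω | ψ₀ (U ω) ≠ ψ (U ω)} ⊆ Function.support g := by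
    intro ω h
    exact (hstrict ω h).ne'
  have hgpos : 0 < ∫ ω, g ω ∂ℙ := by
    rw [integral_pos_iff_support_of_nonneg hnonneg hgint]
    exact lt_of_lt_of_le hpos (measure_mono hsupp)
  rw [hg, integral_sub hint hint₀] at hgpos
  linarith
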